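/- If φ: X → Y is a surjective group homomorphism and ψ: Y → Z is a group homomorphism such that X and Z are T-reflection groups and ψ∘φ is a T-reflection morphism, then Y becomes a T-reflection group with structure map t ↦ φ(t^X) and action induced via ψ. -/
import Mathlib


/-- A symmetric system: a set with a multiplication satisfying (S1) and (S2). -/
structure SymmetricSystem (T : Type*) where
  mul : T → T → T
  s1 : ∀ s t : T, mul s (mul s t) = t
  s2 : ∀ r s t : T, mul r (mul s t) = mul (mul r s) (mul r t)

/-- A `T`-reflection group: a group `X` acting on `T` together with a map `t ↦ t^X`
satisfying axioms (G1)-(G4). -/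
structure ReflectionGroup {T : Type*} (S : SymmetricSystem T) (X : Type*) [Group X] where
  act : X → T → T
  act_one : ∀ t : T, act 1 t = t
  act_mul : ∀ x y : X, ∀ t : T, act (x * y) t = act x (act y t)
  refl : T → X
  g1 : Subgroup.closure (Set.range refl) = ⊤
  g2 : ∀ s t : T, act (refl t) s = S.mul t s
  g3 : ∀ s t : T, refl t * refl s * (refl t)⁻¹ = refl (S.mul t s)
  g4 : ∀ t : T, refl t * refl t = 1


/-- If `φ : X → Y` is surjective, `ψ : Y → Z` is a homomorphism, `X` and `Z` are
`T`-reflection groups and `ψ ∘ φ` is a `T`-reflection morphism, then `Y` is a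
`T`-reflection group with structure map `t ↦ φ(t^X)` and action induced via `ψ`. -/
theorem reflectionGroup_of_intermediate
    {T : Type*} (S : SymmetricSystem T) {X Y Z : Type*} [Group X] [Group Y] [Group Z]
    (RX : ReflectionGroup S X) (RZ : ReflectionGroup S Z)
    (φ : X →* Y) (ψ : Y →* Z)
    (hφ : Function.Surjective φ)
    (hcomp : ∀ t : T, ψ (φ (RX.refl t)) = RZ.refl t) :
    ∃ RY : ReflectionGroup S Y,
      (∀ t : T, RY.refl t = φ (RX.refl t)) ∧
      (∀ (y : Y) (t : T), RY.act y t = RZ.act (ψ y) t) := by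
  refine ⟨⟨fun y t => RZ.act (ψ y) t, fun t => by simp [RZ.act_one],
      fun x y t => by simp [RZ.act_mul], fun t => φ (RX.refl t), ?_, ?_, ?_, ?_⟩,
    fun t => rfl, fun y t => rfl⟩
  · have : Set.range (fun t => φ (RX.refl t)) = φ '' Set.range RX.refl := by
      rw [← Set.range_comp]; rfl
    rw [this, ← MonoidHom.map_closure, RX.g1]
    simp [Subgroup.map_top_of_surjective φ hφ]
  · intro s t; simp [hcomp, RZ.g2]
  · intro s t
    rw [← map_inv, ← map_mul, ← map_mul, RX.g3]
  · intro t; rw [← map_mul, RX.g4, map_one]
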